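/- Given real numbers a > 0, m > 0, δ > 0 with δ < a, and ω < 0, there exists a differentiable, positive, strictly decreasing function g : (0,∞) → ℝ such that g(a) = 1/m, g'(a) = ω, and g(a-δ) > 1. -/

import Mathlib

open Filter Topology

private lemma stmt8_aux (m δ ω : ℝ) (hm : 0 < m) (hδ : 0 < δ) (hω : ω < 0) :
    ∃ d : ℝ, 0 < d ∧ 2 * d * Real.exp (-(d * δ)) < -ω ∧
      2 * Real.exp (-(d * δ)) < 1 / m := by
  have hbase : Tendsto (fun d : ℝ => d * δ) atTop atTop :=
    Tendsto.atTop_mul_const hδ tendsto_id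
  have h1 : Tendsto (fun d : ℝ => (d * δ) * Real.exp (-(d * δ))) atTop (𝓝 0) := by
    have := (Real.tendsto_pow_mul_exp_neg_atTop_nhds_zero 1).comp hbase
    simpa [Function.comp_def] using this
  have h2 : Tendsto (fun d : ℝ => 2 * d * Real.exp (-(d * δ))) atTop (𝓝 0) := by
    have := h1.const_mul (2 / δ)
    simp only [mul_zero] at this
    refine this.congr (fun d => ?_)
    field_simp
  have h3 : Tendsto (fun d : ℝ => 2 * Real.exp (-(d * δ))) atTop (𝓝 0) := by
    have := (Real.tendsto_exp_atBot.comp (tendsto_neg_atBot_iff.mpr hbase)).const_mul 2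
    simpa using this
  have e1 : ∀ᶠ d : ℝ in atTop, 2 * d * Real.exp (-(d * δ)) < -ω :=
    (h2.eventually (eventually_lt_nhds (by linarith : (0:ℝ) < -ω)))
  have e2 : ∀ᶠ d : ℝ in atTop, 2 * Real.exp (-(d * δ)) < 1 / m :=
    (h3.eventually (eventually_lt_nhds (by positivity : (0:ℝ) < 1 / m)))
  have e3 : ∀ᶠ d : ℝ in atTop, (0:ℝ) < d := eventually_gt_atTop 0
  obtain ⟨d, hd1, hd2, hd3⟩ := (e3.and (e1.and e2)).exists
  exact ⟨d, hd1, hd2, hd3⟩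

/-- Given `a, m, δ > 0` with `δ < a` and `ω < 0`, there is a
differentiable, positive, strictly decreasing function `g` on `(0, ∞)` with
`g(a) = 1/m`, `g'(a) = ω` and `g(a - δ) > 1`. -/
theorem stmt8 (a m δ ω : ℝ) (ha : 0 < a) (hm : 0 < m) (hδ : 0 < δ) (hδa : δ < a)
    (hω : ω < 0) :
    ∃ g : ℝ → ℝ,
      (∀ x ∈ Set.Ioi (0 : ℝ), DifferentiableWithinAt ℝ g (Set.Ioi 0) x) ∧
      (∀ x ∈ Set.Ioi (0 : ℝ), 0 < g x) ∧
      StrictAntiOn g (Set.Ioi 0) ∧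
      g a = 1 / m ∧
      HasDerivAt g ω a ∧
      1 < g (a - δ) := by
  obtain ⟨d, hd, hdw, hwm⟩ := stmt8_aux m δ ω hm hδ hω
  set w : ℝ := 2 * Real.exp (-(d * δ)) with hw_def
  have hw : 0 < w := by positivity
  set u : ℝ := 1 / m - w with hu_def
  have hu : 0 < u := by simp only [hu_def]; linarith
  set c : ℝ := (-ω - d * w) / u with hc_def
  have hdw' : d * w < -ω := by
    have : d * w = 2 * d * Real.exp (-(d * δ)) := by rw [hw_def]; ring
    linarith [this ▸ hdw]
  have hc : 0 < c := by
    apply div_pos; linarith; exact hu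
  have hcu : c * u = -ω - d * w := div_mul_cancel₀ _ (ne_of_gt hu)
  set g : ℝ → ℝ := fun x => u * Real.exp (-c * (x - a)) + w * Real.exp (-d * (x - a))
    with hg_def
  have hderiv : ∀ x : ℝ,
      HasDerivAt g (u * (Real.exp (-c * (x - a)) * (-c)) + w * (Real.exp (-d * (x - a)) * (-d))) x := by
    intro x
    have hx : HasDerivAt (fun y : ℝ => y - a) 1 x := (hasDerivAt_id x).sub_const a
    have h1 : HasDerivAt (fun y : ℝ => -c * (y - a)) (-c) x := by
      simpa using hx.const_mul (-c)
    have h2 : HasDerivAt (fun y : ℝ => -d * (y - a)) (-d) x := by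
      simpa using hx.const_mul (-d)
    exact ((h1.exp.const_mul u).add (h2.exp.const_mul w))
  have hpos : ∀ x : ℝ, 0 < g x := by
    intro x
    have := Real.exp_pos (-c * (x - a))
    have := Real.exp_pos (-d * (x - a))
    positivity
  have hanti : StrictAnti g := by
    intro x y hxy
    have e1 : Real.exp (-c * (y - a)) < Real.exp (-c * (x - a)) :=
      Real.exp_lt_exp.mpr (by nlinarith)
    have e2 : Real.exp (-d * (y - a)) < Real.exp (-d * (x - a)) :=
      Real.exp_lt_exp.mpr (by nlinarith)
    have := mul_lt_mul_of_pos_left e1 hu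
    have := mul_lt_mul_of_pos_left e2 hw
    simp only [hg_def]
    linarith
  refine ⟨g, ?_, fun x _ => hpos x, hanti.strictAntiOn _, ?_, ?_, ?_⟩
  · intro x _
    exact ((hderiv x).differentiableAt).differentiableWithinAt
  · simp only [hg_def]
    rw [sub_self, mul_zero, mul_zero, Real.exp_zero]
    simp only [mul_one, hu_def]
    ring
  · have := hderiv a
    rw [sub_self, mul_zero, mul_zero, Real.exp_zero] at this
    have heq : u * (1 * -c) + w * (1 * -d) = ω := by
      have : c * u = -ω - d * w := hcu
      nlinarith
    rwa [heq] at this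
  · have hterm : w * Real.exp (-d * (a - δ - a)) = 2 := by
      rw [hw_def, mul_assoc, ← Real.exp_add]
      norm_num
    have h1 : 0 < u * Real.exp (-c * (a - δ - a)) := by positivity
    simp only [hg_def]
    rw [hterm]
    linarith
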